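/- If I is a weakly polymatroidal monomial ideal in S = K[x_1,...,x_n], then I has linear quotients with respect to the pure lexicographic order on its minimal monomial generators induced by x_1 > x_2 > ... > x_n. -/

import Mathlib

open MvPolynomial

namespace Paper

variable (K : Type) [Field K]

/-- The monomial `x^a` in `K[x_0, …, x_{n-1}]`. -/
noncomputable def mono (n : ℕ) (a : Fin n → ℕ) : MvPolynomial (Fin n) K :=
  MvPolynomial.monomial (Finsupp.equivFunOnFinite.symm a) 1

/-- A monomial ideal: an ideal generated by the monomials it contains. -/
def IsMonomialIdeal (n : ℕ) (I : Ideal (MvPolynomial (Fin n) K)) : Prop :=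
  I = Ideal.span ((mono K n) '' {a | mono K n a ∈ I})

/-- The set of exponent vectors of the minimal monomial generators `G(I)`. -/
def minGen (n : ℕ) (I : Ideal (MvPolynomial (Fin n) K)) : Set (Fin n → ℕ) :=
  {a | mono K n a ∈ I ∧ ∀ i : Fin n, 0 < a i → mono K n (a - Pi.single i 1) ∉ I}

/-- The monomial ideal generated by a set of exponent vectors. -/
noncomputable def monomialIdealOf (n : ℕ) (A : Set (Fin n → ℕ)) :
    Ideal (MvPolynomial (Fin n) K) :=
  Ideal.span ((mono K n) '' A)

/-- Weakly polymatroidal monomial ideal. -/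
def WeaklyPolymatroidal (n : ℕ) (I : Ideal (MvPolynomial (Fin n) K)) : Prop :=
  IsMonomialIdeal K n I ∧
    ∀ a b : Fin n → ℕ, a ∈ minGen K n I → b ∈ minGen K n I →
      ∀ t : Fin n, (∀ s : Fin n, s < t → a s = b s) → b t < a t →
        ∃ j : Fin n, t < j ∧ 0 < b j ∧
          mono K n (b + Pi.single t 1 - Pi.single j 1) ∈ I

/-- Polymatroidal monomial ideal. -/
def Polymatroidal (n : ℕ) (I : Ideal (MvPolynomial (Fin n) K)) : Prop :=
  IsMonomialIdeal K n I ∧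
    (∃ d : ℕ, ∀ a ∈ minGen K n I, ∑ i, a i = d) ∧
    ∀ a b : Fin n → ℕ, a ∈ minGen K n I → b ∈ minGen K n I →
      ∀ i : Fin n, b i < a i →
        ∃ j : Fin n, a j < b j ∧
          (a + Pi.single j 1 - Pi.single i 1) ∈ minGen K n I

/-- `I` has linear quotients with respect to the order `u 0 ≺ u 1 ≺ …` on its
minimal monomial generators: each colon ideal `(u 0, …, u (i-1)) : u i` is
generated by a subset of the variables. -/
def LinearQuotientsWith (n : ℕ) (I : Ideal (MvPolynomial (Fin n) K)) (t : ℕ)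
    (u : Fin t → (Fin n → ℕ)) : Prop :=
  Function.Injective u ∧ Set.range u = minGen K n I ∧
    ∀ i : Fin t, 0 < (i : ℕ) →
      ∃ V : Set (Fin n),
        Submodule.colon (monomialIdealOf K n (u '' {j | (j : ℕ) < (i : ℕ)}))
            (Ideal.span {mono K n (u i)}) =
          Ideal.span ((fun k => (X k : MvPolynomial (Fin n) K)) '' V)

/-- `pd_R M ≤ d`, defined recursively via kernels of surjections from projectives. -/
def HasProjDimLE (R : Type) [CommRing R] :
    ℕ → ∀ (M : Type) [AddCommGroup M] [Module R M], Prop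
  | 0, M, _, _ => Module.Projective R M
  | (d + 1), M, _, _ =>
      ∃ (P : Type) (_ : AddCommGroup P) (_ : Module R P) (f : P →ₗ[R] M),
        Module.Projective R P ∧ Function.Surjective f ∧
          HasProjDimLE R d (LinearMap.ker f)

/-- The projective dimension of `M` over `R`, as an element of `ℕ∞`. -/
noncomputable def projDim (R : Type) [CommRing R] (M : Type) [AddCommGroup M]
    [Module R M] : ℕ∞ :=
  sInf ((↑) '' {d : ℕ | HasProjDimLE R d M})

/-- The depth of `M` with respect to the ideal `J`: the supremum of the lengths of
`M`-regular sequences consisting of elements of `J`. -/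
noncomputable def depth (R : Type) [CommRing R] (J : Ideal R) (M : Type)
    [AddCommGroup M] [Module R M] : ℕ∞ :=
  sSup ((↑) '' {k : ℕ | ∃ rs : List R, rs.length = k ∧ (∀ r ∈ rs, r ∈ J) ∧
    RingTheory.Sequence.IsRegular M rs})

/-- The graded maximal ideal `(x_0, …, x_{n-1})` of `K[x_0, …, x_{n-1}]`. -/
noncomputable def maxIdeal (n : ℕ) : Ideal (MvPolynomial (Fin n) K) :=
  Ideal.span (Set.range X)

/-- The Stanley space `x^a · K[Z]`, as a `K`-subspace of `K[x_0, …, x_{n-1}]`. -/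
noncomputable def stanleySpace (n : ℕ) (a : Fin n → ℕ) (Z : Finset (Fin n)) :
    Submodule K (MvPolynomial (Fin n) K) :=
  Submodule.span K ((fun e => mono K n (a + e)) '' {e | ∀ j, j ∉ Z → e j = 0})

/-- A Stanley decomposition of `S/I`: a `K`-vector space decomposition
`S = I ⊕ (⊕ᵢ x^{a i} K[Z i])`. -/
def IsStanleyDecOfQuot (n : ℕ) (I : Ideal (MvPolynomial (Fin n) K)) (t : ℕ)
    (a : Fin t → (Fin n → ℕ)) (Z : Fin t → Finset (Fin n)) : Prop :=
  iSupIndep (fun o : Option (Fin t) =>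
      o.elim (Submodule.restrictScalars K I) (fun i => stanleySpace K n (a i) (Z i))) ∧
    (⨆ o : Option (Fin t),
      o.elim (Submodule.restrictScalars K I) (fun i => stanleySpace K n (a i) (Z i))) = ⊤

/-- The Stanley depth of `S/I`. -/
noncomputable def sdepthQuot (n : ℕ) (I : Ideal (MvPolynomial (Fin n) K)) : ℕ∞ :=
  sSup ((↑) '' {d : ℕ | ∃ (t : ℕ) (a : Fin t → (Fin n → ℕ)) (Z : Fin t → Finset (Fin n)),
    IsStanleyDecOfQuot K n I t a Z ∧ ∀ i, d ≤ (Z i).card})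

/-- A Stanley decomposition of the ideal `I` itself: `I = ⊕ᵢ x^{a i} K[Z i]`
as `K`-vector spaces. -/
def IsStanleyDecOfIdeal (n : ℕ) (I : Ideal (MvPolynomial (Fin n) K)) (t : ℕ)
    (a : Fin t → (Fin n → ℕ)) (Z : Fin t → Finset (Fin n)) : Prop :=
  iSupIndep (fun i : Fin t => stanleySpace K n (a i) (Z i)) ∧
    (⨆ i : Fin t, stanleySpace K n (a i) (Z i)) = Submodule.restrictScalars K I

/-- The Stanley depth of the ideal `I`. -/
noncomputable def sdepthIdeal (n : ℕ) (I : Ideal (MvPolynomial (Fin n) K)) : ℕ∞ :=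
  sSup ((↑) '' {d : ℕ | ∃ (t : ℕ) (a : Fin t → (Fin n → ℕ)) (Z : Fin t → Finset (Fin n)),
    IsStanleyDecOfIdeal K n I t a Z ∧ ∀ i, d ≤ (Z i).card})

end Paper

namespace Aux

open Paper

variable {K : Type} [Field K] {n : ℕ}

lemma esymm_apply (a : Fin n → ℕ) (r : Fin n) : (Finsupp.equivFunOnFinite.symm a) r = a r := rfl

lemma lex_lt_iff {a b : Fin n → ℕ} :
    toLex a < toLex b ↔ ∃ i, (∀ j, j < i → a j = b j) ∧ a i < b i := Iff.rfl

lemma mono_mul (a b : Fin n → ℕ) : mono K n a * mono K n b = mono K n (a + b) := by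
  unfold mono
  rw [monomial_mul, one_mul]
  have : Finsupp.equivFunOnFinite.symm a + Finsupp.equivFunOnFinite.symm b
      = Finsupp.equivFunOnFinite.symm (a + b) := by
    ext r
    simp only [Finsupp.add_apply, esymm_apply, Pi.add_apply]
  rw [this]

lemma mono_mem_of_le {J : Ideal (MvPolynomial (Fin n) K)} {a c : Fin n → ℕ}
    (ha : mono K n a ∈ J) (hle : a ≤ c) : mono K n c ∈ J := by
  have : mono K n (c - a) * mono K n a = mono K n c := by
    rw [mono_mul]
    congr 1
    funext r
    exact Nat.sub_add_cancel (hle r)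
  rw [← this]
  exact Ideal.mul_mem_left _ _ ha

lemma mem_monomialIdealOf_iff {A : Set (Fin n → ℕ)} {p : MvPolynomial (Fin n) K} :
    p ∈ monomialIdealOf K n A ↔
      ∀ m ∈ p.support, ∃ a ∈ A, ∀ r, a r ≤ m r := by
  have himg : (mono K n) '' A
      = (fun s => monomial s (1 : K)) '' (Finsupp.equivFunOnFinite.symm '' A) := by
    rw [Set.image_image]; rfl
  unfold monomialIdealOf
  rw [himg, mem_ideal_span_monomial_image]
  constructor
  · intro h m hm
    obtain ⟨si, ⟨a, ha, rfl⟩, hle⟩ := h m hm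
    exact ⟨a, ha, fun r => hle r⟩
  · intro h m hm
    obtain ⟨a, ha, hle⟩ := h m hm
    exact ⟨Finsupp.equivFunOnFinite.symm a, ⟨a, ha, rfl⟩, fun r => hle r⟩

lemma mono_mem_monomialIdealOf_iff {A : Set (Fin n → ℕ)} {c : Fin n → ℕ} :
    mono K n c ∈ monomialIdealOf K n A ↔ ∃ a ∈ A, a ≤ c := by
  rw [mem_monomialIdealOf_iff]
  have hsupp : (mono K n c).support = {Finsupp.equivFunOnFinite.symm c} := by
    classical
    unfold mono
    rw [support_monomial, if_neg one_ne_zero]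
  rw [hsupp]
  simp only [Finset.mem_singleton, forall_eq]
  constructor
  · rintro ⟨a, ha, hle⟩
    exact ⟨a, ha, fun r => hle r⟩
  · rintro ⟨a, ha, hle⟩
    exact ⟨a, ha, fun r => hle r⟩

lemma exists_minGen_le {I : Ideal (MvPolynomial (Fin n) K)} :
    ∀ c : Fin n → ℕ, mono K n c ∈ I → ∃ g ∈ minGen K n I, g ≤ c := by
  intro c hc
  by_cases h : ∀ i, 0 < c i → mono K n (c - Pi.single i 1) ∉ I
  · exact ⟨c, ⟨hc, h⟩, le_refl c⟩
  · push_neg at h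
    obtain ⟨i, hi, hmem⟩ := h
    obtain ⟨g, hg, hle⟩ := exists_minGen_le (c - Pi.single i 1) hmem
    exact ⟨g, hg, hle.trans (fun r => Nat.sub_le _ _)⟩
termination_by c => ∑ r, c r
decreasing_by
  refine Finset.sum_lt_sum (fun r _ => Nat.sub_le _ _) ⟨i, Finset.mem_univ i, ?_⟩
  simp only [Pi.sub_apply, Pi.single_eq_same]
  omega

lemma minGen_antichain {I : Ideal (MvPolynomial (Fin n) K)} {g g' : Fin n → ℕ}
    (hg : g ∈ minGen K n I) (hg' : g' ∈ minGen K n I) (hle : g ≤ g') : g = g' := by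
  by_contra hne
  have : ∃ i, g i < g' i := by
    by_contra h
    push_neg at h
    exact hne (le_antisymm hle (fun r => h r))
  obtain ⟨i, hi⟩ := this
  refine hg'.2 i (lt_of_le_of_lt (Nat.zero_le _) hi) (mono_mem_of_le hg.1 ?_)
  intro r
  rcases eq_or_ne r i with rfl | hri
  · simp only [Pi.sub_apply, Pi.single_eq_same]
    omega
  · simp only [Pi.sub_apply, Pi.single_eq_of_ne hri]
    exact (hle r).trans (Nat.le_refl _)

end Aux

namespace Aux2
open Paper Aux

variable {K : Type} [Field K] {n : ℕ}

lemma lex_trichotomy (a b : Fin n → ℕ) :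
    toLex a < toLex b ∨ a = b ∨ toLex b < toLex a :=
  by
    rcases lt_trichotomy (toLex a) (toLex b) with h | h | h
    · exact Or.inl h
    · exact Or.inr (Or.inl (toLex.injective h))
    · exact Or.inr (Or.inr h)

lemma keyLemma {I : Ideal (MvPolynomial (Fin n) K)} (hI : WeaklyPolymatroidal K n I)
    (hfin : (minGen K n I).Finite) :
    ∀ N : ℕ, ∀ t : Fin n, (t : ℕ) < N →
      ∀ b ∈ minGen K n I, ∀ a ∈ minGen K n I,
        (∀ s : Fin n, s < t → a s = b s) → b t < a t →
        ∃ h ∈ minGen K n I, h ≤ b + Pi.single t 1 ∧ toLex b < toLex h := by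
  classical
  intro N
  induction N with
  | zero => intro t ht; omega
  | succ N IH =>
    intro t ht b hb a ha hagree hltab
    obtain ⟨k, htk, hbk, hmem⟩ := hI.2 a b ha hb t hagree hltab
    obtain ⟨w0, hw0, hw0le⟩ := exists_minGen_le _ hmem
    have hkt : k ≠ t := ne_of_gt htk
    have hw0le' : w0 ≤ b + Pi.single t 1 := fun r => (hw0le r).trans (Nat.sub_le _ _)
    have hw0k : w0 k < b k := by
      have h1 := hw0le k
      simp only [Pi.sub_apply, Pi.add_apply, Pi.single_eq_same,
        Pi.single_eq_of_ne hkt] at h1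
      omega
    suffices inner : ∀ M : ℕ, ∀ w ∈ minGen K n I,
        (hfin.toFinset.filter (fun g => toLex w < toLex g)).card < M →
        w ≤ b + Pi.single t 1 → w k < b k →
        ∃ h ∈ minGen K n I, h ≤ b + Pi.single t 1 ∧ toLex b < toLex h by
      exact inner _ w0 hw0 (Nat.lt_succ_self _) hw0le' hw0k
    intro M
    induction M with
    | zero => intro w _ hcard; omega
    | succ M IHM =>
      intro w hw hcard hwle hwk
      rcases lex_trichotomy w b with hlex | hlex | hlex
      · -- w <lex b
        obtain ⟨s, hsag, hslt⟩ := lex_lt_iff.mp hlex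
        have hst : s < t := by
          by_contra hst
          push_neg at hst
          have hwb : w ≤ b := by
            intro r
            rcases lt_trichotomy r s with hr | hr | hr
            · exact le_of_eq (hsag r hr)
            · subst hr; exact hslt.le
            · have hrt : r ≠ t := ne_of_gt (lt_of_le_of_lt hst hr)
              have h1 := hwle r
              simpa only [Pi.add_apply, Pi.single_eq_of_ne hrt, add_zero] using h1
          have := minGen_antichain hw hb hwb
          subst this
          exact lt_irrefl _ hslt
        have hsag' : ∀ r : Fin n, r < s → a r = w r :=
          fun r hr => (hagree r (hr.trans hst)).trans (hsag r hr).symm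
        have haw : w s < a s := by rw [hagree s hst]; exact hslt
        obtain ⟨h1, hh1, hh1le, hh1lex⟩ :=
          IH s (by have h1 := hst; have h2 := ht; simp only [Fin.lt_def] at h1 ⊢; omega)
            w hw a ha hsag' haw
        have hh1le' : h1 ≤ b + Pi.single t 1 := by
          intro r
          rcases eq_or_ne r s with rfl | hrs
          · have h2 := hh1le r
            simp only [Pi.add_apply, Pi.single_eq_same] at h2
            have h3 : r ≠ t := ne_of_lt hst
            simp only [Pi.add_apply, Pi.single_eq_of_ne h3, add_zero]
            omega
          · have h2 := hh1le r
            simp only [Pi.add_apply, Pi.single_eq_of_ne hrs, add_zero] at h2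
            exact h2.trans (hwle r)
        have hks : k ≠ s := ne_of_gt (hst.trans htk)
        have hh1k : h1 k < b k := by
          have h2 := hh1le k
          simp only [Pi.add_apply, Pi.single_eq_of_ne hks, add_zero] at h2
          exact lt_of_le_of_lt h2 hwk
        refine IHM h1 hh1 ?_ hh1le' hh1k
        have hss : hfin.toFinset.filter (fun g => toLex h1 < toLex g)
            ⊂ hfin.toFinset.filter (fun g => toLex w < toLex g) := by
          constructor
          · intro g hg
            simp only [Finset.mem_filter] at hg ⊢
            exact ⟨hg.1, _root_.trans hh1lex hg.2⟩
          · intro hsub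
            have hmem1 : h1 ∈ hfin.toFinset.filter (fun g => toLex w < toLex g) := by
              simp only [Finset.mem_filter, Set.Finite.mem_toFinset]
              exact ⟨hh1, hh1lex⟩
            have := hsub hmem1
            simp only [Finset.mem_filter] at this
            exact lt_irrefl _ this.2
        have := Finset.card_lt_card hss
        omega
      · -- w = b : contradiction with w k < b k
        subst hlex
        omega
      · exact ⟨w, hw, hwle, hlex⟩

end Aux2


open Paper
open Aux Aux2
/-- A weakly polymatroidal ideal has linear quotients with respect to the
pure lexicographic order (induced by x_1 > x_2 > … > x_n) on its minimal generators. -/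
theorem weaklyPolymatroidal_linearQuotients_purelex
    (K : Type) [Field K] (n : ℕ) (I : Ideal (MvPolynomial (Fin n) K))
    (hI : WeaklyPolymatroidal K n I)
    (t : ℕ) (u : Fin t → (Fin n → ℕ))
    (hinj : Function.Injective u)
    (hrange : Set.range u = minGen K n I)
    (hsort : ∀ i j : Fin t, i < j → toLex (u j) < toLex (u i)) :
    LinearQuotientsWith K n I t u := by
  classical
  have hfin : (minGen K n I).Finite := hrange ▸ Set.finite_range u
  refine ⟨hinj, hrange, ?_⟩
  intro i hi
  set b := u i with hbdef
  have hb : b ∈ minGen K n I := hrange ▸ Set.mem_range_self i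
  set prev := monomialIdealOf K n (u '' {j | (j : ℕ) < (i : ℕ)}) with hprev
  refine ⟨{k : Fin n | mono K n (b + Pi.single k 1) ∈ prev}, ?_⟩
  -- key: membership of earlier generators
  have hidx : ∀ j2 : Fin t, toLex b < toLex (u j2) → (j2 : ℕ) < (i : ℕ) := by
    intro j2 hj2
    rcases lt_trichotomy j2 i with h | h | h
    · exact h
    · subst h; exact absurd hj2 (lt_irrefl _)
    · exact absurd (_root_.trans hj2 (hsort i j2 h)) (lt_irrefl _)
  apply le_antisymm
  · -- colon ⊆ span of variables
    intro f hf
    have hfm : f * mono K n b ∈ prev := by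
      rw [Ideal.mem_colon_span_singleton] at hf
      exact hf
    rw [mem_ideal_span_X_image]
    intro m hm
    -- m + b is in the support of f * mono b
    have hcoeff : coeff (m + Finsupp.equivFunOnFinite.symm b) (f * mono K n b) ≠ 0 := by
      unfold Paper.mono
      rw [coeff_mul_monomial, mul_one]
      exact mem_support_iff.mp hm
    have hsupp : (m + Finsupp.equivFunOnFinite.symm b)
        ∈ (f * mono K n b).support := mem_support_iff.mpr hcoeff
    obtain ⟨a', ⟨j, hj, rfl⟩, hle⟩ := mem_monomialIdealOf_iff.mp hfm _ hsupp
    -- u j is lex-greater than b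
    have hjlt : toLex b < toLex (u j) := hsort j i hj
    obtain ⟨s, hsag, hslt⟩ := lex_lt_iff.mp hjlt
    -- apply the key lemma with a := u j, index s
    obtain ⟨h, hh, hhle, hhlex⟩ := keyLemma hI hfin n s s.isLt b hb (u j)
      (hrange ▸ Set.mem_range_self j) (fun r hr => (hsag r hr).symm) hslt
    obtain ⟨j2, rfl⟩ := hrange ▸ hh
    refine ⟨s, ?_, ?_⟩
    · show mono K n (b + Pi.single s 1) ∈ prev
      refine mono_mem_of_le (Ideal.subset_span ⟨u j2, ⟨j2, hidx j2 hhlex, rfl⟩, rfl⟩) hhle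
    · -- m s ≠ 0
      have h1 := hle s
      have h2 : (Finsupp.equivFunOnFinite.symm b) s = b s := rfl
      have h3 : ((m + Finsupp.equivFunOnFinite.symm b) : Fin n →₀ ℕ) s = m s + b s := by
        simp [Finsupp.add_apply, h2]
      rw [h3] at h1
      have : b s < u j s := hslt
      omega
  · -- span of variables ⊆ colon
    rw [Ideal.span_le]
    rintro _ ⟨k, hk, rfl⟩
    rw [SetLike.mem_coe, Ideal.mem_colon_span_singleton]
    show X k * mono K n b ∈ prev
    have hXk : (X k : MvPolynomial (Fin n) K) = mono K n (Pi.single k 1) := by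
      unfold Paper.mono
      rw [X, Finsupp.equivFunOnFinite_symm_single]
    rw [hXk, mono_mul]
    have : Pi.single k 1 + b = b + Pi.single k 1 := add_comm _ _
    rw [this]
    exact hk
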